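/- Let (𝒜, φ) be a non-commutative probability space and, for each N ≥ 1, let a_1, …, a_N ∈ 𝒜 satisfy φ(a_i) = 0, φ(a_i²) = 1, have uniformly bounded moments of all orders, and be BMT independent with respect to a digraph G_N = ([N], E_N). Let M_N be the largest integer M ≥ 0 such that G_N contains a complete digraph on M vertices, and suppose liminf_{N→∞} M_N/N > 0. If for every k ≥ 1 the limit m_{2k} = lim_{N→∞} φ(((a_1 + ⋯ + a_N)/√N)^{2k}) exists, then for every real c with 0 < c < liminf_{N→∞} M_N/(2N) one has m_{2k} ≥ (2k−1)!! · c^k for all k ≥ 1; consequently sup_{k ≥ 1} (m_{2k})^{1/(2k)} = +∞, so the limiting distribution (if it exists as a probability measure on ℝ) does not have compact support. -/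

import Mathlib

open scoped Classical
open Filter

noncomputable section

/-- The relation defining the kernel of `f` restricted to the index set `S`,
subordinated to the digraph with edge relation `E`: `k ∼ k'` iff `f k = f k'` and
every `l ∈ S` strictly between `k` and `k'` with `f l ≠ f k` satisfies `(f l, f k) ∈ E`. -/
def kerGRelOn {m : ℕ} {V : Type*} (E : V → V → Prop) (f : Fin m → V)
    (S : Finset (Fin m)) (k k' : Fin m) : Prop :=
  f k = f k' ∧ ∀ l ∈ S, min k k' < l → l < max k k' → f l ≠ f k → E (f l) (f k)

/-- The blocks of the kernel of `f|_S` subordinated to the digraph `E`. -/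
def kerGBlocks {m : ℕ} {V : Type*} (E : V → V → Prop) (f : Fin m → V)
    (S : Finset (Fin m)) : Finset (Finset (Fin m)) :=
  S.image fun k => S.filter fun k' => kerGRelOn E f S k k'

/-- The blocks of the plain kernel `ker[f]` of `f : [m] → V`. -/
def kerBlocks {m : ℕ} {V : Type*} (f : Fin m → V) : Finset (Finset (Fin m)) :=
  Finset.univ.image fun k => Finset.univ.filter fun k' => f k = f k'

/-- The product of `a k` for `k ∈ B`, taken in increasing order of `k`. -/
def blockProd {A : Type*} [Monoid A] {m : ℕ} (a : Fin m → A) (B : Finset (Fin m)) : A :=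
  ((B.sort (· ≤ ·)).map a).prod

/-- The edge set of the nesting-crossing graph of the partition `π`, relabeled along `f`:
the pair `(f-label of B, f-label of C)` is an edge whenever `B ≠ C` are blocks of `π` and
some `l ∈ B` lies strictly between two elements (equivalently, between min and max) of `C`. -/
def nestCrossEdges {m : ℕ} {V : Type*} (π : Finset (Finset (Fin m))) (f : Fin m → V) :
    Set (V × V) :=
  { p | ∃ B ∈ π, ∃ C ∈ π, B ≠ C ∧
      (∃ l ∈ B, ∃ c₁ ∈ C, ∃ c₂ ∈ C, c₁ < l ∧ l < c₂) ∧
      (∃ k ∈ B, f k = p.1) ∧ (∃ k' ∈ C, f k' = p.2) }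

/-- A family of (non-unital) subalgebras of a non-commutative probability space `(𝒜, φ)`
is BMT independent with respect to the digraph `E` on the index set `I`. -/
def BMTIndep {𝒜 : Type*} [Ring 𝒜] [Algebra ℂ 𝒜] (φ : 𝒜 →ₗ[ℂ] ℂ)
    {I : Type*} (E : I → I → Prop) (A : I → NonUnitalSubalgebra ℂ 𝒜) : Prop :=
  ∀ (m : ℕ), 1 ≤ m → ∀ (idx : Fin m → I) (a : Fin m → 𝒜),
    (∀ k, a k ∈ A (idx k)) →
    φ (List.ofFn a).prod = ∏ B ∈ kerGBlocks E idx Finset.univ, φ (blockProd a B)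

/-- Random variables `a 0, …, a (N-1)` are BMT independent with respect to the digraph `E`. -/
def BMTIndepVars {𝒜 : Type*} [Ring 𝒜] [Algebra ℂ 𝒜] (φ : 𝒜 →ₗ[ℂ] ℂ)
    {N : ℕ} (E : Fin N → Fin N → Prop) (a : Fin N → 𝒜) : Prop :=
  ∀ (m : ℕ) (idx : Fin m → Fin N),
    φ (List.ofFn fun k => a (idx k)).prod
      = ∏ B ∈ kerGBlocks E idx Finset.univ, φ (blockProd (fun k => a (idx k)) B)


set_option linter.unusedSectionVars false

def kerGClass {m : ℕ} {V : Type*} (E : V → V → Prop) (f : Fin m → V) (k : Fin m) :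
    Finset (Fin m) :=
  Finset.univ.filter fun k' => kerGRelOn E f Finset.univ k k'

lemma kerGRelOn_refl {m : ℕ} {V : Type*} (E : V → V → Prop) (f : Fin m → V)
    (S : Finset (Fin m)) (k : Fin m) : kerGRelOn E f S k k := by
  refine ⟨rfl, fun l _ h1 h2 _ => ?_⟩
  simp only [min_self, max_self] at h1 h2
  exact absurd (h1.trans h2) (lt_irrefl _)

lemma mem_kerGClass_self {m : ℕ} {V : Type*} (E : V → V → Prop) (f : Fin m → V) (k : Fin m) :
    k ∈ kerGClass E f k :=
  Finset.mem_filter.2 ⟨Finset.mem_univ _, kerGRelOn_refl E f _ k⟩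

lemma kerGClass_val {m : ℕ} {V : Type*} {E : V → V → Prop} {f : Fin m → V} {k l : Fin m}
    (h : l ∈ kerGClass E f k) : f l = f k :=
  ((Finset.mem_filter.1 h).2.1).symm

lemma kerGBlocks_eq_image {m : ℕ} {V : Type*} (E : V → V → Prop) (f : Fin m → V) :
    kerGBlocks E f Finset.univ = Finset.univ.image (kerGClass E f) := rfl

lemma mem_kerGBlocks {m : ℕ} {V : Type*} {E : V → V → Prop} {f : Fin m → V}
    {B : Finset (Fin m)} (h : B ∈ kerGBlocks E f Finset.univ) :
    ∃ k, B = kerGClass E f k := by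
  rw [kerGBlocks_eq_image] at h
  obtain ⟨k, _, hk⟩ := Finset.mem_image.1 h
  exact ⟨k, hk.symm⟩

lemma blockProd_eq_pow {A : Type*} [Monoid A] {m : ℕ} (a : Fin m → A) (B : Finset (Fin m))
    (x : A) (hx : ∀ l ∈ B, a l = x) : blockProd a B = x ^ B.card := by
  have : (B.sort (· ≤ ·)).map a = List.replicate B.card x := by
    rw [List.eq_replicate_iff]
    constructor
    · rw [List.length_map, Finset.length_sort]
    · intro y hy
      obtain ⟨l, hl, rfl⟩ := List.mem_map.1 hy
      exact hx l (Finset.mem_sort (α := Fin m) (· ≤ ·) |>.1 hl)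
  rw [blockProd, this, List.prod_replicate]

lemma prod_blocks_eq_zero {𝒜 : Type*} [Ring 𝒜] [Algebra ℂ 𝒜] (φ : 𝒜 →ₗ[ℂ] ℂ)
    {m N : ℕ} {E : Fin N → Fin N → Prop} {idx : Fin m → Fin N} {a : Fin m → 𝒜}
    {k0 : Fin m} (h : kerGClass E idx k0 = {k0}) (hz : φ (a k0) = 0) :
    ∏ B ∈ kerGBlocks E idx Finset.univ, φ (blockProd a B) = 0 := by
  apply Finset.prod_eq_zero (i := ({k0} : Finset (Fin m)))
  · rw [kerGBlocks_eq_image, ← h]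
    exact Finset.mem_image_of_mem _ (Finset.mem_univ k0)
  · have : blockProd a {k0} = a k0 := by
      rw [blockProd, Finset.sort_singleton]
      simp
    rw [this, hz]
def fiber {m : ℕ} {V : Type*} (f : Fin m → V) (k : Fin m) : Finset (Fin m) :=
  Finset.univ.filter fun l => f l = f k

lemma mem_fiber {m : ℕ} {V : Type*} {f : Fin m → V} {k l : Fin m} :
    l ∈ fiber f k ↔ f l = f k := by simp [fiber]

lemma kerGClass_subset_fiber {m : ℕ} {V : Type*} (E : V → V → Prop) (f : Fin m → V)
    (k : Fin m) : kerGClass E f k ⊆ fiber f k := by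
  intro l hl
  exact mem_fiber.2 ((Finset.mem_filter.1 hl).2.1).symm

lemma kerGClass_eq_singleton_of_fiber {m : ℕ} {V : Type*} {E : V → V → Prop} {f : Fin m → V}
    {k : Fin m} (h : fiber f k = {k}) : kerGClass E f k = {k} := by
  apply Finset.Subset.antisymm
  · exact (kerGClass_subset_fiber E f k).trans (le_of_eq h)
  · intro l hl
    rw [Finset.mem_singleton] at hl
    subst hl
    exact Finset.mem_filter.2 ⟨Finset.mem_univ _, rfl, fun l _ h1 h2 _ => by
      simp only [min_self, max_self] at h1 h2; exact absurd (h1.trans h2) (lt_irrefl _)⟩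

lemma kerGClass_eq_singleton_of_pair {m : ℕ} {V : Type*} {E : V → V → Prop} {f : Fin m → V}
    {k k' : Fin m} (hne : k ≠ k') (h : fiber f k ⊆ {k, k'})
    (hrel : ¬ kerGRelOn E f Finset.univ k k') : kerGClass E f k = {k} := by
  apply Finset.Subset.antisymm
  · intro l hl
    have hl2 := (kerGClass_subset_fiber E f k).trans h hl
    rw [Finset.mem_insert, Finset.mem_singleton] at hl2
    rcases hl2 with rfl | rfl
    · exact Finset.mem_singleton_self _
    · exact absurd (Finset.mem_filter.1 hl).2 hrel
  · intro l hl
    rw [Finset.mem_singleton] at hl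
    subst hl
    exact Finset.mem_filter.2 ⟨Finset.mem_univ _, rfl, fun l _ h1 h2 _ => by
      simp only [min_self, max_self] at h1 h2; exact absurd (h1.trans h2) (lt_irrefl _)⟩

lemma kerGClass_eq_fiber {m : ℕ} {V : Type*} {E : V → V → Prop} {f : Fin m → V}
    (hcond : ∀ k k' : Fin m, f k = f k' → kerGRelOn E f Finset.univ k k') (k : Fin m) :
    kerGClass E f k = fiber f k := by
  apply Finset.Subset.antisymm (kerGClass_subset_fiber E f k)
  intro l hl
  exact Finset.mem_filter.2 ⟨Finset.mem_univ _, hcond k l (mem_fiber.1 hl).symm⟩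
section term
variable {𝒜 : Type*} [Ring 𝒜] [Algebra ℂ 𝒜] (φ : 𝒜 →ₗ[ℂ] ℂ)
variable {N m : ℕ} {E : Fin N → Fin N → Prop} (idx : Fin m → Fin N) (a : Fin N → 𝒜)

lemma term_eq_one
    (hvar : ∀ i, φ (a i * a i) = 1)
    (hpair : ∀ k0, (fiber idx k0).card = 2)
    (hcond : ∀ k k' : Fin m, idx k = idx k' → kerGRelOn E idx Finset.univ k k') :
    ∏ B ∈ kerGBlocks E idx Finset.univ, φ (blockProd (fun k => a (idx k)) B) = 1 := by
  apply Finset.prod_eq_one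
  intro B hB
  rw [kerGBlocks_eq_image] at hB
  obtain ⟨k, _, hk⟩ := Finset.mem_image.1 hB
  subst hk
  have hclass : kerGClass E idx k = fiber idx k := by
    apply Finset.Subset.antisymm
    · intro l hl
      exact mem_fiber.2 (kerGClass_val hl)
    · intro l hl
      exact Finset.mem_filter.2 ⟨Finset.mem_univ _, hcond k l (mem_fiber.1 hl).symm⟩
  have hbp : blockProd (fun k' => a (idx k')) (kerGClass E idx k) = a (idx k) ^ 2 := by
    rw [blockProd_eq_pow _ _ (a (idx k)) (fun l hl => by rw [kerGClass_val hl]),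
      hclass, hpair k]
  rw [hbp, pow_two, hvar]

lemma term_norm_le (C : ℝ) (hC : 1 ≤ C)
    (hmom : ∀ n : ℕ, n ≤ m → ∀ i, ‖φ (a i ^ n)‖ ≤ C) :
    ‖∏ B ∈ kerGBlocks E idx Finset.univ, φ (blockProd (fun k => a (idx k)) B)‖ ≤ C ^ m := by
  rw [norm_prod]
  calc ∏ B ∈ kerGBlocks E idx Finset.univ, ‖φ (blockProd (fun k => a (idx k)) B)‖
      ≤ ∏ _B ∈ kerGBlocks E idx Finset.univ, C := by
        apply Finset.prod_le_prod (fun _ _ => norm_nonneg _)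
        intro B hB
        rw [kerGBlocks_eq_image] at hB
        obtain ⟨k, _, hk⟩ := Finset.mem_image.1 hB
        subst hk
        rw [blockProd_eq_pow _ _ (a (idx k)) (fun l hl => by rw [kerGClass_val hl])]
        exact hmom _ (le_trans (Finset.card_le_card (Finset.subset_univ _))
          (by simp [Finset.card_univ])) _
    _ = C ^ (kerGBlocks E idx Finset.univ).card := Finset.prod_const C
    _ ≤ C ^ m := by
        apply pow_le_pow_right₀ hC
        calc (kerGBlocks E idx Finset.univ).card ≤ (Finset.univ : Finset (Fin m)).card :=
          Finset.card_image_le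
        _ = m := by simp
end term
def pairSet {V : Type*} [Fintype V] (m : ℕ) (J : Finset V) : Finset (Fin m → V) :=
  Finset.univ.filter fun f => (∀ i, f i ∈ J) ∧ ∀ i0, (fiber f i0).card = 2

lemma mem_pairSet {V : Type*} [Fintype V] {m : ℕ} {J : Finset V} {f : Fin m → V} :
    f ∈ pairSet m J ↔ (∀ i, f i ∈ J) ∧ ∀ i0, (fiber f i0).card = 2 := by
  simp [pairSet]

lemma dfac_succ (k : ℕ) :
    (2 * (k + 1) - 1).doubleFactorial = (2 * k + 1) * (2 * k - 1).doubleFactorial := by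
  cases k with
  | zero => simp [Nat.doubleFactorial]
  | succ j =>
      have h1 : 2 * (j + 1 + 1) - 1 = (2 * (j + 1) - 1) + 2 := by omega
      rw [h1, Nat.doubleFactorial_add_two,
        show (2 * (j + 1) - 1) + 2 = 2 * (j + 1) + 1 from by omega]

section count
variable {V : Type*} [Fintype V]

def insMap {m : ℕ} (t : Fin (m + 1)) (v : V) (p : Fin m → V) : Fin (m + 2) → V :=
  Function.extend (fun j => (t.succAbove j).succ) p (fun _ => v)

lemma emb_injective {m : ℕ} (t : Fin (m + 1)) :
    Function.Injective (fun j : Fin m => (t.succAbove j).succ) :=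
  fun _ _ h => Fin.succAbove_right_injective (Fin.succ_injective _ h)

lemma insMap_emb {m : ℕ} (t : Fin (m + 1)) (v : V) (p : Fin m → V) (j : Fin m) :
    insMap t v p ((t.succAbove j).succ) = p j :=
  (emb_injective t).extend_apply p _ j

lemma not_range {m : ℕ} (t : Fin (m + 1)) (i : Fin (m + 2)) :
    (¬ ∃ j : Fin m, (t.succAbove j).succ = i) ↔ (i = 0 ∨ i = t.succ) := by
  constructor
  · intro h
    by_contra hc
    push_neg at hc
    obtain ⟨h0, hts⟩ := hc
    obtain ⟨y, hy⟩ := Fin.exists_succ_eq.2 h0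
    have hyt : y ≠ t := by rintro rfl; exact hts hy.symm
    obtain ⟨z, hz⟩ := Fin.exists_succAbove_eq hyt
    exact h ⟨z, by rw [hz, hy]⟩
  · rintro (rfl | rfl) ⟨j, hj⟩
    · exact Fin.succ_ne_zero _ hj
    · exact Fin.succAbove_ne t j (Fin.succ_injective _ hj)

lemma insMap_zero {m : ℕ} (t : Fin (m + 1)) (v : V) (p : Fin m → V) :
    insMap t v p 0 = v :=
  Function.extend_apply' _ _ _ ((not_range t 0).2 (Or.inl rfl))

lemma insMap_tsucc {m : ℕ} (t : Fin (m + 1)) (v : V) (p : Fin m → V) :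
    insMap t v p t.succ = v :=
  Function.extend_apply' _ _ _ ((not_range t t.succ).2 (Or.inr rfl))

lemma insMap_eq_v_iff {m : ℕ} (t : Fin (m + 1)) (v : V) (p : Fin m → V)
    (hp : ∀ j, p j ≠ v) (i : Fin (m + 2)) :
    insMap t v p i = v ↔ (i = 0 ∨ i = t.succ) := by
  constructor
  · intro h
    by_contra hc
    have hr : ∃ j : Fin m, (t.succAbove j).succ = i := by
      by_contra h2
      exact hc ((not_range t i).1 h2)
    obtain ⟨j, rfl⟩ := hr
    rw [insMap_emb] at h
    exact hp j h
  · rintro (rfl | rfl)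
    · exact insMap_zero t v p
    · exact insMap_tsucc t v p

lemma insMap_mem_pairSet {m : ℕ} (J : Finset V) (t : Fin (m + 1)) (v : V) (hv : v ∈ J)
    (p : Fin m → V) (hp : p ∈ pairSet m (J.erase v)) :
    insMap t v p ∈ pairSet (m + 2) J := by
  obtain ⟨hpJ, hpfib⟩ := mem_pairSet.1 hp
  have hpv : ∀ j, p j ≠ v := fun j => Finset.ne_of_mem_erase (hpJ j)
  rw [mem_pairSet]
  constructor
  · intro i
    by_cases hr : ∃ j : Fin m, (t.succAbove j).succ = i
    · obtain ⟨j, rfl⟩ := hr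
      rw [insMap_emb]
      exact Finset.mem_of_mem_erase (hpJ j)
    · rcases (not_range t i).1 hr with rfl | rfl
      · rw [insMap_zero]; exact hv
      · rw [insMap_tsucc]; exact hv
  · intro i0
    by_cases hr : ∃ j : Fin m, (t.succAbove j).succ = i0
    · -- fiber equals image of fiber of p
      obtain ⟨j0, rfl⟩ := hr
      have : fiber (insMap t v p) ((t.succAbove j0).succ)
          = (fiber p j0).image (fun j => (t.succAbove j).succ) := by
        ext i
        rw [mem_fiber, insMap_emb, Finset.mem_image]
        constructor
        · intro hi
          have hiv : insMap t v p i ≠ v := by rw [hi]; exact hpv j0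
          have hri : ∃ j : Fin m, (t.succAbove j).succ = i := by
            by_contra h2
            rcases (not_range t i).1 h2 with rfl | rfl
            · exact hiv (insMap_zero t v p)
            · exact hiv (insMap_tsucc t v p)
          obtain ⟨j, rfl⟩ := hri
          rw [insMap_emb] at hi
          exact ⟨j, mem_fiber.2 hi, rfl⟩
        · rintro ⟨j, hj, rfl⟩
          rw [insMap_emb]
          exact mem_fiber.1 hj
      rw [this, Finset.card_image_of_injective _ (emb_injective t)]
      exact hpfib j0
    · -- fiber equals {0, t.succ}
      have hv0 : insMap t v p i0 = v := by
        rcases (not_range t i0).1 hr with rfl | rfl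
        · exact insMap_zero t v p
        · exact insMap_tsucc t v p
      have : fiber (insMap t v p) i0 = {0, t.succ} := by
        ext i
        rw [mem_fiber, hv0, insMap_eq_v_iff t v p hpv, Finset.mem_insert,
          Finset.mem_singleton]
      rw [this, Finset.card_insert_of_notMem (by
        rw [Finset.mem_singleton]; exact fun h => Fin.succ_ne_zero t h.symm),
        Finset.card_singleton]

lemma insMap_injOn {m : ℕ} (J : Finset V) :
    ∀ t1 : Fin (m + 1), ∀ v1 ∈ J, ∀ p1 ∈ pairSet m (J.erase v1),
    ∀ t2 : Fin (m + 1), ∀ v2 ∈ J, ∀ p2 ∈ pairSet m (J.erase v2),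
    insMap t1 v1 p1 = insMap t2 v2 p2 → t1 = t2 ∧ v1 = v2 ∧ HEq p1 p2 := by
  intro t1 v1 hv1 p1 hp1 t2 v2 hv2 p2 hp2 heq
  have hpv1 : ∀ j, p1 j ≠ v1 := fun j => Finset.ne_of_mem_erase ((mem_pairSet.1 hp1).1 j)
  have hpv2 : ∀ j, p2 j ≠ v2 := fun j => Finset.ne_of_mem_erase ((mem_pairSet.1 hp2).1 j)
  have hvv : v1 = v2 := by
    have h1 := insMap_zero t1 v1 p1
    have h2 := insMap_zero t2 v2 p2
    rw [← h1, heq, h2]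
  subst hvv
  have htt : t1 = t2 := by
    have h1 : insMap t2 v1 p2 t1.succ = v1 := by rw [← heq]; exact insMap_tsucc t1 v1 p1
    rcases (insMap_eq_v_iff t2 v1 p2 hpv2 t1.succ).1 h1 with h | h
    · exact absurd h (Fin.succ_ne_zero t1)
    · exact Fin.succ_injective _ h
  subst htt
  have hpp : p1 = p2 := by
    funext j
    rw [← insMap_emb t1 v1 p1 j, heq, insMap_emb]
  subst hpp
  exact ⟨rfl, rfl, HEq.rfl⟩

lemma pairSet_card_ge (k : ℕ) : ∀ J : Finset V,
    (2 * k - 1).doubleFactorial * J.card.descFactorial k ≤ (pairSet (2 * k) J).card := by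
  induction k with
  | zero =>
      intro J
      simp only [Nat.mul_zero, Nat.zero_sub, Nat.descFactorial_zero, Nat.mul_one]
      have : (pairSet (2 * 0) J) = Finset.univ := by
        apply Finset.eq_univ_of_forall
        intro f
        rw [mem_pairSet]
        exact ⟨fun i => i.elim0, fun i0 => i0.elim0⟩
      rw [this]
      simp
  | succ k ih =>
      intro J
      -- domain
      set Dom : Finset (Fin (2 * k + 1) × Σ _v : V, (Fin (2 * k) → V)) :=
        (Finset.univ : Finset (Fin (2 * k + 1))) ×ˢ
          (J.sigma fun v => pairSet (2 * k) (J.erase v)) with hDom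
      have hmaps : ∀ d ∈ Dom, insMap d.1 d.2.1 d.2.2 ∈ pairSet (2 * (k + 1)) J := by
        rintro ⟨t, v, p⟩ hd
        rw [hDom, Finset.mem_product, Finset.mem_sigma] at hd
        exact insMap_mem_pairSet J t v hd.2.1 p hd.2.2
      have hinj : Set.InjOn (fun d : Fin (2 * k + 1) × Σ _v : V, (Fin (2 * k) → V) =>
          insMap d.1 d.2.1 d.2.2) Dom := by
        rintro ⟨t1, v1, p1⟩ hd1 ⟨t2, v2, p2⟩ hd2 heq
        rw [Finset.mem_coe, Finset.mem_product, Finset.mem_sigma] at hd1 hd2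
        obtain ⟨ht, hv, hp⟩ := insMap_injOn J t1 v1 hd1.2.1 p1 hd1.2.2 t2 v2 hd2.2.1 p2 hd2.2.2 heq
        subst ht; subst hv
        rw [eq_of_heq hp]
      have hcard : Dom.card ≤ (pairSet (2 * (k + 1)) J).card :=
        Finset.card_le_card_of_injOn _ hmaps hinj
      have hDomcard : Dom.card = (2 * k + 1) * ∑ v ∈ J, (pairSet (2 * k) (J.erase v)).card := by
        rw [hDom, Finset.card_product, Finset.card_univ, Fintype.card_fin, Finset.card_sigma]
      rcases Finset.eq_empty_or_nonempty J with rfl | ⟨v0, hv0⟩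
      · simp [Nat.zero_descFactorial_succ]
      · obtain ⟨c, hc⟩ : ∃ c, J.card = c + 1 :=
          ⟨J.card - 1, (Nat.succ_pred_eq_of_pos (Finset.card_pos.2 ⟨v0, hv0⟩)).symm⟩
        calc (2 * (k + 1) - 1).doubleFactorial * J.card.descFactorial (k + 1)
            = (2 * k + 1) * (2 * k - 1).doubleFactorial *
              ((c + 1) * c.descFactorial k) := by
              rw [dfac_succ, hc, Nat.succ_descFactorial_succ]
          _ = (2 * k + 1) * ∑ _v ∈ J, (2 * k - 1).doubleFactorial * c.descFactorial k := by
              rw [Finset.sum_const, hc]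
              ring
          _ ≤ (2 * k + 1) * ∑ v ∈ J, (pairSet (2 * k) (J.erase v)).card := by
              apply Nat.mul_le_mul_left
              apply Finset.sum_le_sum
              intro v hv
              have := ih (J.erase v)
              rwa [Finset.card_erase_of_mem hv, hc, Nat.succ_sub_one] at this
          _ = Dom.card := hDomcard.symm
          _ ≤ _ := hcard
end count
lemma small_card_le {m N r : ℕ} (hN : 0 < N) :
    ((Finset.univ : Finset (Fin m → Fin N)).filter
      (fun idx => (Finset.univ.image idx).card ≤ r)).card ≤ r ^ m * N ^ r := by
  rcases Nat.eq_zero_or_pos r with rfl | hr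
  · rcases Nat.eq_zero_or_pos m with rfl | hm
    · calc _ ≤ (Finset.univ : Finset (Fin 0 → Fin N)).card := Finset.card_filter_le _ _
        _ = 1 := by simp [Finset.card_univ]
        _ ≤ _ := by simp
    · have : ((Finset.univ : Finset (Fin m → Fin N)).filter
          (fun idx => (Finset.univ.image idx).card ≤ 0)) = ∅ := by
        apply Finset.filter_false_of_mem
        intro idx _
        have hne : (Finset.univ.image idx).Nonempty :=
          ⟨idx ⟨0, hm⟩, Finset.mem_image_of_mem _ (Finset.mem_univ _)⟩
        simp only [Nat.le_zero, Finset.card_eq_zero]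
        exact fun h => (Finset.nonempty_iff_ne_empty.1 hne) h
      rw [this]
      simp
  · set F : (Fin m → Fin N) → ((Fin m → Fin r) × (Fin r → Fin N)) := fun idx =>
      if h : (Finset.univ.image idx).card ≤ r then
        (fun i => Fin.castLE h (((Finset.univ.image idx).orderIsoOfFin rfl).symm
            ⟨idx i, Finset.mem_image_of_mem _ (Finset.mem_univ i)⟩),
         fun j => if h2 : (j : ℕ) < (Finset.univ.image idx).card then
            (((Finset.univ.image idx).orderIsoOfFin rfl) ⟨j, h2⟩ : Fin N) else ⟨0, hN⟩)
      else (fun _ => ⟨0, hr⟩, fun _ => ⟨0, hN⟩) with hF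
    have hrec : ∀ idx : Fin m → Fin N, (Finset.univ.image idx).card ≤ r →
        ∀ i, (F idx).2 ((F idx).1 i) = idx i := by
      intro idx h i
      rw [hF]
      simp only [h, dif_pos]
      have hlt : ((((Finset.univ.image idx).orderIsoOfFin rfl).symm
          ⟨idx i, Finset.mem_image_of_mem _ (Finset.mem_univ i)⟩ : Fin _) : ℕ)
          < (Finset.univ.image idx).card :=
        (((Finset.univ.image idx).orderIsoOfFin rfl).symm _).isLt
      simp only [Fin.coe_castLE, hlt, dif_pos]
      have : (⟨((((Finset.univ.image idx).orderIsoOfFin rfl).symm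
          ⟨idx i, Finset.mem_image_of_mem _ (Finset.mem_univ i)⟩ : Fin _) : ℕ), hlt⟩ :
            Fin (Finset.univ.image idx).card)
          = (((Finset.univ.image idx).orderIsoOfFin rfl).symm
          ⟨idx i, Finset.mem_image_of_mem _ (Finset.mem_univ i)⟩) := by
        apply Fin.ext
        rfl
      rw [this, OrderIso.apply_symm_apply]
    calc ((Finset.univ : Finset (Fin m → Fin N)).filter
          (fun idx => (Finset.univ.image idx).card ≤ r)).card
        ≤ (Finset.univ : Finset ((Fin m → Fin r) × (Fin r → Fin N))).card := by
          apply Finset.card_le_card_of_injOn F (fun _ _ => Finset.mem_univ _)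
          intro x hx y hy hxy
          rw [Finset.mem_coe, Finset.mem_filter] at hx hy
          funext i
          rw [← hrec x hx.2 i, ← hrec y hy.2 i, hxy]
      _ = r ^ m * N ^ r := by
          rw [Finset.card_univ]
          simp [Fintype.card_fun]

theorem sum_pow_eq {A : Type*} [Semiring A] {ι : Type*} [Fintype ι] (f : ι → A) (m : ℕ) :
    (∑ i, f i) ^ m = ∑ idx : Fin m → ι, (List.ofFn fun k => f (idx k)).prod := by
  induction m with
  | zero =>
      simp [List.ofFn_zero]
  | succ m ih =>
      rw [pow_succ', ih, Finset.mul_sum]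
      rw [← (Fin.consEquiv (fun _ : Fin (m + 1) => ι)).sum_comp (fun idx => (List.ofFn fun k => f (idx k)).prod)]
      rw [Fintype.sum_prod_type]
      simp only [Finset.sum_mul]
      rw [Finset.sum_comm]
      apply Finset.sum_congr rfl
      intro g _
      apply Finset.sum_congr rfl
      intro i _
      simp [Fin.consEquiv, List.ofFn_succ, Fin.cons]

lemma fiber_eq_filter {m : ℕ} {V : Type*} [DecidableEq V] (f : Fin m → V) (i0 : Fin m) :
    fiber f i0 = Finset.univ.filter fun l => f l = f i0 := by
  ext l; simp [fiber]

/-- the "good" predicate: pair partition + kernel condition -/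
def goodIdx {m N : ℕ} (E : Fin N → Fin N → Prop) (idx : Fin m → Fin N) : Prop :=
  (∀ i0, (fiber idx i0).card = 2) ∧
    ∀ k1 k2 : Fin m, idx k1 = idx k2 → kerGRelOn E idx Finset.univ k1 k2

section key
variable {𝒜 : Type*} [Ring 𝒜] [Algebra ℂ 𝒜] (φ : 𝒜 →ₗ[ℂ] ℂ)

/-- term vanishes when not good and not small -/
lemma term_eq_zero {N k : ℕ} {E : Fin N → Fin N → Prop} {a : Fin N → 𝒜}
    (hmean : ∀ i, φ (a i) = 0) {idx : Fin (2 * k) → Fin N}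
    (hng : ¬ goodIdx E idx)
    (hns : ¬ ((∀ i0, 2 ≤ (fiber idx i0).card) ∧ (Finset.univ.image idx).card < k)) :
    ∏ B ∈ kerGBlocks E idx Finset.univ, φ (blockProd (fun j => a (idx j)) B) = 0 := by
  by_cases hfib : ∀ i0, 2 ≤ (fiber idx i0).card
  · -- all fibers at least 2; image card ≥ k; so pair partition
    have himg : k ≤ (Finset.univ.image idx).card := by
      by_contra h
      exact hns ⟨hfib, by omega⟩
    have hsum : ∑ x ∈ Finset.univ.image idx,
        (Finset.univ.filter fun i => idx i = x).card = 2 * k := by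
      rw [← Finset.card_eq_sum_card_fiberwise
        (fun i _ => Finset.mem_image_of_mem idx (Finset.mem_univ i))]
      simp
    have hfib' : ∀ x ∈ Finset.univ.image idx,
        2 ≤ (Finset.univ.filter fun i => idx i = x).card := by
      intro x hx
      obtain ⟨i0, _, rfl⟩ := Finset.mem_image.1 hx
      have := hfib i0
      rwa [fiber_eq_filter] at this
    have himg' : (Finset.univ.image idx).card = k := by
      by_contra h
      have hgt : k < (Finset.univ.image idx).card := lt_of_le_of_ne himg (Ne.symm h)
      have : 2 * k + 1 ≤ 2 * k := by
        calc 2 * k + 1 ≤ 2 * (Finset.univ.image idx).card :=  by omega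
          _ = ∑ _x ∈ Finset.univ.image idx, 2 := by rw [Finset.sum_const]; ring
          _ ≤ ∑ x ∈ Finset.univ.image idx,
              (Finset.univ.filter fun i => idx i = x).card := Finset.sum_le_sum hfib'
          _ = 2 * k := hsum
      omega
    have hpair : ∀ i0, (fiber idx i0).card = 2 := by
      have h2 : ∀ x ∈ Finset.univ.image idx,
          (Finset.univ.filter fun i => idx i = x).card = 2 := by
        have heq : ∑ _x ∈ Finset.univ.image idx, 2
            = ∑ x ∈ Finset.univ.image idx,
                (Finset.univ.filter fun i => idx i = x).card := by
          rw [hsum, Finset.sum_const, himg']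
          ring
        intro x hx
        exact ((Finset.sum_eq_sum_iff_of_le hfib').1 heq x hx).symm
      intro i0
      rw [fiber_eq_filter]
      exact h2 (idx i0) (Finset.mem_image_of_mem idx (Finset.mem_univ i0))
    -- not good ⇒ kernel condition fails for some pair
    rw [goodIdx, not_and] at hng
    have hcond := hng hpair
    push_neg at hcond
    obtain ⟨k1, k2, hk12, hrel⟩ := hcond
    have hne : k1 ≠ k2 := by
      rintro rfl
      exact hrel (kerGRelOn_refl E idx _ k1)
    have hsub : fiber idx k1 ⊆ {k1, k2} := by
      have hsub' : ({k1, k2} : Finset (Fin (2 * k))) ⊆ fiber idx k1 := by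
        intro i hi
        rcases Finset.mem_insert.1 hi with rfl | hi
        · exact mem_fiber.2 rfl
        · rw [Finset.mem_singleton] at hi
          subst hi
          exact mem_fiber.2 hk12.symm
      have hcard2 : ({k1, k2} : Finset (Fin (2 * k))).card = 2 := by
        rw [Finset.card_insert_of_notMem (by simpa using hne), Finset.card_singleton]
      exact le_of_eq (Finset.eq_of_subset_of_card_le hsub' (by rw [hpair k1, hcard2])).symm
    exact prod_blocks_eq_zero φ (kerGClass_eq_singleton_of_pair hne hsub hrel)
      (hmean (idx k1))
  · -- some fiber is a singleton
    push_neg at hfib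
    obtain ⟨i0, hi0⟩ := hfib
    have h1 : (fiber idx i0).card = 1 := by
      have : i0 ∈ fiber idx i0 := mem_fiber.2 rfl
      have := Finset.card_pos.2 ⟨i0, this⟩
      omega
    obtain ⟨x, hx⟩ := Finset.card_eq_one.1 h1
    have hxi : x = i0 := by
      have : i0 ∈ fiber idx i0 := mem_fiber.2 rfl
      rw [hx, Finset.mem_singleton] at this
      exact this.symm
    subst hxi
    exact prod_blocks_eq_zero φ (kerGClass_eq_singleton_of_fiber hx) (hmean (idx x))

/-- the key moment identity with error bound -/
lemma key_identity {N k : ℕ} {E : Fin N → Fin N → Prop} {a : Fin N → 𝒜}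
    (hmean : ∀ i, φ (a i) = 0) (hvar : ∀ i, φ (a i * a i) = 1)
    (hindep : BMTIndepVars φ E a)
    (C : ℝ) (hC : 1 ≤ C) (hmomC : ∀ n : ℕ, n ≤ 2 * k → ∀ i, ‖φ (a i ^ n)‖ ≤ C) :
    ∃ err : ℂ,
      φ ((∑ i, a i) ^ (2 * k))
        = ((Finset.univ.filter fun idx : Fin (2 * k) → Fin N => goodIdx E idx).card : ℂ)
            + err ∧
      ‖err‖ ≤ ((Finset.univ.filter fun idx : Fin (2 * k) → Fin N =>
          (Finset.univ.image idx).card ≤ k - 1).card : ℝ) * C ^ (2 * k) := by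
  have hexp : φ ((∑ i, a i) ^ (2 * k))
      = ∑ idx : Fin (2 * k) → Fin N,
          ∏ B ∈ kerGBlocks E idx Finset.univ, φ (blockProd (fun j => a (idx j)) B) := by
    rw [sum_pow_eq, map_sum]
    exact Finset.sum_congr rfl fun idx _ => hindep (2 * k) idx
  set T : (Fin (2 * k) → Fin N) → ℂ := fun idx =>
    ∏ B ∈ kerGBlocks E idx Finset.univ, φ (blockProd (fun j => a (idx j)) B) with hT
  set Small : Finset (Fin (2 * k) → Fin N) :=
    Finset.univ.filter fun idx =>
      (∀ i0, 2 ≤ (fiber idx i0).card) ∧ (Finset.univ.image idx).card < k with hSmall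
  refine ⟨∑ idx ∈ Small, T idx, ?_, ?_⟩
  · rw [hexp]
    have hsplit : (∑ idx : Fin (2 * k) → Fin N, T idx)
        = (∑ idx ∈ Finset.univ.filter fun idx : Fin (2 * k) → Fin N => goodIdx E idx, T idx)
          + ∑ idx ∈ Finset.univ.filter
              fun idx : Fin (2 * k) → Fin N => ¬ goodIdx E idx, T idx :=
      (Finset.sum_filter_add_sum_filter_not _ _ _).symm
    have hgood : (∑ idx ∈ Finset.univ.filter
        fun idx : Fin (2 * k) → Fin N => goodIdx E idx, T idx)
        = ((Finset.univ.filter fun idx : Fin (2 * k) → Fin N => goodIdx E idx).card : ℂ) := by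
      rw [Finset.sum_congr rfl fun idx hidx => ?_, Finset.sum_const, nsmul_eq_mul, mul_one]
      have hg := (Finset.mem_filter.1 hidx).2
      exact term_eq_one φ idx a hvar hg.1 hg.2
    have hbad : (∑ idx ∈ Finset.univ.filter
        fun idx : Fin (2 * k) → Fin N => ¬ goodIdx E idx, T idx)
        = ∑ idx ∈ Small, T idx := by
      rw [← Finset.sum_filter_add_sum_filter_not
        (Finset.univ.filter fun idx : Fin (2 * k) → Fin N => ¬ goodIdx E idx)
        (fun idx => (∀ i0, 2 ≤ (fiber idx i0).card) ∧ (Finset.univ.image idx).card < k) T]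
      have hzero : ∑ idx ∈ (Finset.univ.filter
          fun idx : Fin (2 * k) → Fin N => ¬ goodIdx E idx).filter
            (fun idx => ¬ ((∀ i0, 2 ≤ (fiber idx i0).card)
              ∧ (Finset.univ.image idx).card < k)), T idx = 0 := by
        apply Finset.sum_eq_zero
        intro idx hidx
        rw [Finset.mem_filter, Finset.mem_filter] at hidx
        exact term_eq_zero φ hmean hidx.1.2 hidx.2
      rw [hzero, add_zero]
      congr 1
      rw [Finset.filter_filter, hSmall]
      apply Finset.filter_congr
      intro idx _
      constructor
      · rintro ⟨_, h⟩; exact h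
      · intro h
        refine ⟨?_, h⟩
        rintro ⟨hpair, _⟩
        have : (Finset.univ.image idx).card = k := by
          have hsum : ∑ x ∈ Finset.univ.image idx,
              (Finset.univ.filter fun i => idx i = x).card = 2 * k := by
            rw [← Finset.card_eq_sum_card_fiberwise
              (fun i _ => Finset.mem_image_of_mem idx (Finset.mem_univ i))]
            simp
          have h2 : ∀ x ∈ Finset.univ.image idx,
              (Finset.univ.filter fun i => idx i = x).card = 2 := by
            intro x hx
            obtain ⟨i0, _, rfl⟩ := Finset.mem_image.1 hx
            have := hpair i0
            rwa [fiber_eq_filter] at this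
          rw [Finset.sum_congr rfl h2, Finset.sum_const, smul_eq_mul] at hsum
          omega
        omega
    rw [hsplit, hgood, hbad]
  · calc ‖∑ idx ∈ Small, T idx‖ ≤ ∑ idx ∈ Small, ‖T idx‖ := norm_sum_le _ _
      _ ≤ ∑ _idx ∈ Small, C ^ (2 * k) := by
          apply Finset.sum_le_sum
          intro idx _
          exact term_norm_le φ idx a C hC (fun n hn i => hmomC n hn i)
      _ = (Small.card : ℝ) * C ^ (2 * k) := by rw [Finset.sum_const, nsmul_eq_mul]
      _ ≤ _ := by
          apply mul_le_mul_of_nonneg_right _ (by positivity)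
          have : Small ⊆ Finset.univ.filter fun idx : Fin (2 * k) → Fin N =>
              (Finset.univ.image idx).card ≤ k - 1 := by
            intro idx hidx
            rw [hSmall, Finset.mem_filter] at hidx
            rw [Finset.mem_filter]
            exact ⟨Finset.mem_univ _, by omega⟩
          exact_mod_cast Nat.cast_le.2 (Finset.card_le_card this)

/-- good set contains the pair set over a complete subgraph -/
lemma pairSet_subset_good {N k : ℕ} {E : Fin N → Fin N → Prop} {J : Finset (Fin N)}
    (hJ : ∀ j ∈ J, ∀ j' ∈ J, j ≠ j' → E j j') :
    pairSet (2 * k) J ⊆ Finset.univ.filter fun idx : Fin (2 * k) → Fin N => goodIdx E idx := by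
  intro idx hidx
  obtain ⟨hJ', hfib⟩ := mem_pairSet.1 hidx
  rw [Finset.mem_filter]
  refine ⟨Finset.mem_univ _, hfib, ?_⟩
  intro k1 k2 h12
  refine ⟨h12, fun l _ _ _ hne => ?_⟩
  exact hJ (idx l) (hJ' l) (idx k1) (hJ' k1) hne

end key
lemma factorial_le_dfac : ∀ k : ℕ, k.factorial ≤ (2 * k - 1).doubleFactorial := by
  intro k
  induction k with
  | zero => simp [Nat.doubleFactorial]
  | succ k ih =>
      rw [dfac_succ, Nat.factorial_succ]
      exact Nat.mul_le_mul (by omega) ih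

/-- if the graphs `G_N` contain complete digraphs on `M_N` vertices with
`liminf M_N / N > 0`, then the even limiting moments `m_{2k}` satisfy
`m_{2k} ≥ (2k-1)!! c^k` for every `0 < c < liminf M_N/(2N)`, and consequently
`sup_k (m_{2k})^{1/(2k)} = +∞` (the limiting distribution has non-compact support). -/
theorem stmt18 {𝒜 : Type*} [Ring 𝒜] [Algebra ℂ 𝒜] (φ : 𝒜 →ₗ[ℂ] ℂ) (hφ : φ 1 = 1)
    (a : (N : ℕ) → Fin N → 𝒜) (E : (N : ℕ) → Fin N → Fin N → Prop)
    (hE : ∀ N v, ¬ E N v v)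
    (hmean : ∀ N i, φ (a N i) = 0)
    (hvar : ∀ N i, φ (a N i * a N i) = 1)
    (hindep : ∀ N, BMTIndepVars φ (E N) (a N))
    (hmom : ∀ n : ℕ, ∃ C : ℝ, ∀ N, ∀ i : Fin N, ‖φ (a N i ^ n)‖ ≤ C)
    (M : ℕ → ℕ)
    (hM : ∀ N, IsGreatest
      {M' : ℕ | ∃ J : Finset (Fin N), J.card = M' ∧
        ∀ j ∈ J, ∀ j' ∈ J, j ≠ j' → E N j j'} (M N))
    (hliminf : 0 < Filter.liminf (fun N : ℕ => (M N : ℝ) / N) atTop)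
    (mom : ℕ → ℝ)
    (hmom2 : ∀ k : ℕ, 1 ≤ k →
      Tendsto
        (fun N : ℕ => φ ((∑ i : Fin N, a N i) ^ (2 * k)) / ((Real.sqrt N : ℝ) : ℂ) ^ (2 * k))
        atTop (nhds ((mom k : ℂ)))) :
    (∀ c : ℝ, 0 < c → c < Filter.liminf (fun N : ℕ => (M N : ℝ) / (2 * N)) atTop →
      ∀ k : ℕ, 1 ≤ k → ((2 * k - 1).doubleFactorial : ℝ) * c ^ k ≤ mom k) ∧
    (∀ R : ℝ, ∃ k : ℕ, 1 ≤ k ∧ R < mom k ^ ((1 : ℝ) / (2 * k))) := by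
  have hMle : ∀ N, M N ≤ N := by
    intro N
    obtain ⟨J, hJcard, _⟩ := (hM N).1
    calc M N = J.card := hJcard.symm
      _ ≤ (Finset.univ : Finset (Fin N)).card := Finset.card_le_card (Finset.subset_univ _)
      _ = N := by simp
  have part1 : ∀ c : ℝ, 0 < c →
      c < Filter.liminf (fun N : ℕ => (M N : ℝ) / (2 * N)) atTop →
      ∀ k : ℕ, 1 ≤ k → ((2 * k - 1).doubleFactorial : ℝ) * c ^ k ≤ mom k := by
    intro c hc hclt k hk
    -- a uniform moment bound
    set C : ℝ := 1 + ∑ n ∈ Finset.range (2 * k + 1), |(hmom n).choose| with hCdef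
    have hsumnn : (0:ℝ) ≤ ∑ n ∈ Finset.range (2 * k + 1), |(hmom n).choose| :=
      Finset.sum_nonneg fun _ _ => abs_nonneg _
    have hC1 : 1 ≤ C := by rw [hCdef]; linarith
    have hCb : ∀ n : ℕ, n ≤ 2 * k → ∀ N, ∀ i : Fin N, ‖φ (a N i ^ n)‖ ≤ C := by
      intro n hn N i
      calc ‖φ (a N i ^ n)‖ ≤ (hmom n).choose := (hmom n).choose_spec N i
        _ ≤ |(hmom n).choose| := le_abs_self _
        _ ≤ ∑ n ∈ Finset.range (2 * k + 1), |(hmom n).choose| :=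
            Finset.single_le_sum (f := fun n => |(hmom n).choose|)
              (fun _ _ => abs_nonneg _) (Finset.mem_range.2 (by omega))
        _ ≤ C := by rw [hCdef]; linarith
    -- key identity per N
    have hkey : ∀ N : ℕ, ∃ err : ℂ,
        φ ((∑ i, a N i) ^ (2 * k))
          = ((Finset.univ.filter fun idx : Fin (2 * k) → Fin N =>
              goodIdx (E N) idx).card : ℂ) + err ∧
        ‖err‖ ≤ ((Finset.univ.filter fun idx : Fin (2 * k) → Fin N =>
            (Finset.univ.image idx).card ≤ k - 1).card : ℝ) * C ^ (2 * k) :=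
      fun N => key_identity φ (hmean N) (hvar N) (hindep N) C hC1 (fun n hn i => hCb n hn N i)
    set g : ℕ → ℝ := fun N =>
      ((Finset.univ.filter fun idx : Fin (2 * k) → Fin N =>
        goodIdx (E N) idx).card : ℝ) / (N : ℝ) ^ k with hg
    -- the error terms tend to zero
    have hdiff : ∀ᶠ N in atTop,
        ‖φ ((∑ i, a N i) ^ (2 * k)) / ((Real.sqrt N : ℝ) : ℂ) ^ (2 * k) - ((g N : ℝ) : ℂ)‖
          ≤ (((k - 1) ^ (2 * k) : ℕ) : ℝ) * C ^ (2 * k) / N := by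
      filter_upwards [Filter.eventually_ge_atTop 1] with N hN
      obtain ⟨err, heq, hbd⟩ := hkey N
      have hNpos : (0:ℝ) < (N:ℝ) := by exact_mod_cast hN
      have hsq : ((Real.sqrt N : ℝ) : ℂ) ^ (2 * k) = (((N : ℝ) ^ k : ℝ) : ℂ) := by
        rw [← Complex.ofReal_pow]
        congr 1
        rw [pow_mul, Real.sq_sqrt (Nat.cast_nonneg N)]
      have hNk : (((N : ℝ) ^ k : ℝ) : ℂ) ≠ 0 := by
        simp only [ne_eq, Complex.ofReal_eq_zero]
        positivity
      rw [hsq, heq, add_div, hg]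
      have : ((((Finset.univ.filter fun idx : Fin (2 * k) → Fin N =>
          goodIdx (E N) idx).card : ℝ) / (N : ℝ) ^ k : ℝ) : ℂ)
          = ((Finset.univ.filter fun idx : Fin (2 * k) → Fin N =>
            goodIdx (E N) idx).card : ℂ) / (((N : ℝ) ^ k : ℝ) : ℂ) := by
        push_cast
        ring
      rw [this, add_sub_cancel_left, norm_div]
      have hnorm : ‖(((N : ℝ) ^ k : ℝ) : ℂ)‖ = (N : ℝ) ^ k := by
        rw [Complex.norm_real, Real.norm_of_nonneg (by positivity)]
      rw [hnorm]
      have hsc : ((Finset.univ.filter fun idx : Fin (2 * k) → Fin N =>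
          (Finset.univ.image idx).card ≤ k - 1).card : ℝ)
          ≤ (((k - 1) ^ (2 * k) : ℕ) : ℝ) * (N : ℝ) ^ (k - 1) := by
        have := small_card_le (m := 2 * k) (N := N) (r := k - 1) (by omega)
        calc ((Finset.univ.filter fun idx : Fin (2 * k) → Fin N =>
            (Finset.univ.image idx).card ≤ k - 1).card : ℝ)
            ≤ (((k - 1) ^ (2 * k) * N ^ (k - 1) : ℕ) : ℝ) := by exact_mod_cast this
          _ = (((k - 1) ^ (2 * k) : ℕ) : ℝ) * (N : ℝ) ^ (k - 1) := by push_cast; ring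
      rw [div_le_div_iff₀ (by positivity) hNpos]
      calc ‖err‖ * (N:ℝ)
          ≤ (((k - 1) ^ (2 * k) : ℕ) : ℝ) * (N : ℝ) ^ (k - 1) * C ^ (2 * k) * (N:ℝ) := by
            apply mul_le_mul_of_nonneg_right _ hNpos.le
            exact hbd.trans (mul_le_mul_of_nonneg_right hsc (by positivity))
        _ = (((k - 1) ^ (2 * k) : ℕ) : ℝ) * C ^ (2 * k) * ((N : ℝ) ^ (k - 1) * (N:ℝ)) := by
            ring
        _ = (((k - 1) ^ (2 * k) : ℕ) : ℝ) * C ^ (2 * k) * (N : ℝ) ^ k := by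
            rw [← pow_succ]
            congr 2
            omega
    have htend0 : Tendsto (fun N =>
        φ ((∑ i, a N i) ^ (2 * k)) / ((Real.sqrt N : ℝ) : ℂ) ^ (2 * k) - ((g N : ℝ) : ℂ))
        atTop (nhds 0) := by
      apply squeeze_zero_norm' hdiff
      have := tendsto_const_div_atTop_nhds_zero_nat
        ((((k - 1) ^ (2 * k) : ℕ) : ℝ) * C ^ (2 * k))
      simpa [div_eq_mul_inv] using this
    have htendg : Tendsto (fun N => ((g N : ℝ) : ℂ)) atTop (nhds ((mom k : ℝ) : ℂ)) := by
      have := (hmom2 k hk).sub htend0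
      simpa using this
    have htendgR : Tendsto g atTop (nhds (mom k)) := by
      have hre := (Complex.continuous_re.tendsto _).comp htendg
      simpa [Function.comp_def] using hre
    -- eventual lower bound on g
    have hbMN : ∀ᶠ N in atTop, c < (M N : ℝ) / (2 * N) :=
      eventually_lt_of_lt_liminf hclt
        ⟨0, Filter.eventually_map.2 (Filter.Eventually.of_forall fun N => by positivity)⟩
    have hNk2 : ∀ᶠ N : ℕ in atTop, (k : ℝ) ≤ c * N := by
      have : Tendsto (fun N : ℕ => c * N) atTop atTop :=
        Tendsto.const_mul_atTop hc tendsto_natCast_atTop_atTop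
      exact this.eventually_ge_atTop _
    have hlow : ∀ᶠ N in atTop, ((2 * k - 1).doubleFactorial : ℝ) * c ^ k ≤ g N := by
      filter_upwards [hbMN, hNk2, Filter.eventually_ge_atTop 1] with N hb hkc hN1
      have hNpos : (0:ℝ) < (N:ℝ) := by positivity
      have hMlow : 2 * c * N ≤ (M N : ℝ) := by
        rw [lt_div_iff₀ (by positivity)] at hb
        nlinarith [hb]
      -- count lower bound in ℕ
      obtain ⟨J, hJcard, hJcomp⟩ := (hM N).1
      have hcount : ((2 * k - 1).doubleFactorial) * ((M N - k) ^ k)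
          ≤ (Finset.univ.filter fun idx : Fin (2 * k) → Fin N => goodIdx (E N) idx).card := by
        calc (2 * k - 1).doubleFactorial * (M N - k) ^ k
            ≤ (2 * k - 1).doubleFactorial * (M N + 1 - k) ^ k := by
              apply Nat.mul_le_mul_left
              exact Nat.pow_le_pow_left (by omega) k
          _ ≤ (2 * k - 1).doubleFactorial * (M N).descFactorial k := by
              apply Nat.mul_le_mul_left
              exact Nat.pow_sub_le_descFactorial (M N) k
          _ = (2 * k - 1).doubleFactorial * J.card.descFactorial k := by rw [hJcard]
          _ ≤ (pairSet (2 * k) J).card := pairSet_card_ge k J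
          _ ≤ _ := Finset.card_le_card (pairSet_subset_good hJcomp)
      have hcn : c * (N:ℝ) ≤ ((M N - k : ℕ) : ℝ) := by
        have h1 : ((M N : ℝ)) - (k:ℝ) ≤ ((M N - k : ℕ) : ℝ) := by
          rcases le_total k (M N) with h | h
          · rw [Nat.cast_sub h]
          · rw [Nat.sub_eq_zero_of_le h]
            have : (M N : ℝ) ≤ (k : ℝ) := by exact_mod_cast h
            simp only [Nat.cast_zero]
            linarith
        nlinarith [hMlow, hkc]
      have hcnn : (0:ℝ) ≤ c * N := by positivity
      rw [hg, le_div_iff₀ (by positivity)]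
      calc ((2 * k - 1).doubleFactorial : ℝ) * c ^ k * (N:ℝ) ^ k
          = ((2 * k - 1).doubleFactorial : ℝ) * (c * N) ^ k := by rw [mul_pow]; ring
        _ ≤ ((2 * k - 1).doubleFactorial : ℝ) * ((M N - k : ℕ) : ℝ) ^ k := by
            apply mul_le_mul_of_nonneg_left _ (by positivity)
            exact pow_le_pow_left₀ hcnn hcn k
        _ = (((2 * k - 1).doubleFactorial * (M N - k) ^ k : ℕ) : ℝ) := by push_cast; ring
        _ ≤ _ := by exact_mod_cast hcount
    exact ge_of_tendsto htendgR hlow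
  refine ⟨part1, ?_⟩
  -- choose a valid c₀
  set L0 : ℝ := Filter.liminf (fun N : ℕ => (M N : ℝ) / N) atTop with hL0
  have hbdd : ∀ N : ℕ, (M N : ℝ) / N ≤ 1 := by
    intro N
    rcases Nat.eq_zero_or_pos N with rfl | hN
    · simp
    · rw [div_le_one (by exact_mod_cast hN)]
      exact_mod_cast hMle N
  have hev2 : ∀ᶠ N in atTop, L0 / 2 < (M N : ℝ) / N :=
    eventually_lt_of_lt_liminf (by linarith)
      ⟨0, Filter.eventually_map.2 (Filter.Eventually.of_forall fun N => by positivity)⟩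
  have hliminf2 : L0 / 4 ≤ Filter.liminf (fun N : ℕ => (M N : ℝ) / (2 * N)) atTop := by
    apply le_liminf_of_le
    · apply Filter.IsBoundedUnder.isCoboundedUnder_ge
      refine ⟨1, Filter.eventually_map.2 (Filter.Eventually.of_forall fun N => ?_)⟩
      calc (M N : ℝ) / (2 * N) ≤ (M N : ℝ) / N := by
            rcases Nat.eq_zero_or_pos N with rfl | hN
            · simp
            · apply div_le_div_of_nonneg_left (by positivity) (by exact_mod_cast hN)
              nlinarith [(by exact_mod_cast hN : (0:ℝ) < (N:ℝ))]
        _ ≤ 1 := hbdd N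
    · filter_upwards [hev2] with N h2
      have : (M N : ℝ) / (2 * N) = ((M N : ℝ) / N) / 2 := by
        rw [div_div]
        ring_nf
      rw [this]
      linarith
  set c0 : ℝ := L0 / 8 with hc0
  have hc0pos : 0 < c0 := by rw [hc0]; linarith
  have hc0lt : c0 < Filter.liminf (fun N : ℕ => (M N : ℝ) / (2 * N)) atTop := by
    calc c0 < L0 / 4 := by rw [hc0]; linarith
      _ ≤ _ := hliminf2
  have hmomlow : ∀ k : ℕ, 1 ≤ k → ((2 * k - 1).doubleFactorial : ℝ) * c0 ^ k ≤ mom k :=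
    part1 c0 hc0pos hc0lt
  intro R
  rcases le_or_gt R 0 with hR | hR
  · refine ⟨1, le_refl _, ?_⟩
    have h1 : (0:ℝ) < mom 1 := by
      have := hmomlow 1 (le_refl _)
      have hdf1 : ((2 * 1 - 1).doubleFactorial : ℝ) = 1 := by norm_num [Nat.doubleFactorial]
      rw [hdf1, one_mul, pow_one] at this
      linarith
    exact lt_of_le_of_lt hR (Real.rpow_pos_of_pos h1 _)
  · -- R > 0
    set x : ℝ := R ^ 2 / c0 with hx
    have hxpos : 0 < x := by positivity
    have hev : ∀ᶠ n : ℕ in atTop, x ^ n / n.factorial < 1 :=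
      (FloorSemiring.tendsto_pow_div_factorial_atTop x).eventually
        (eventually_lt_nhds zero_lt_one)
    obtain ⟨n, hn1, hnlt⟩ := (hev.and (Filter.eventually_ge_atTop 1)).exists
    refine ⟨n, hnlt, ?_⟩
    have hfacpos : (0:ℝ) < (n.factorial : ℝ) := by exact_mod_cast n.factorial_pos
    have hxn : x ^ n < (n.factorial : ℝ) := by
      rw [div_lt_one hfacpos] at hn1
      exact hn1
    have hmomgt : R ^ (2 * n) < mom n := by
      have h1 : ((n.factorial : ℕ) : ℝ) * c0 ^ n ≤ ((2 * n - 1).doubleFactorial : ℝ) * c0 ^ n := by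
        apply mul_le_mul_of_nonneg_right _ (by positivity)
        exact_mod_cast factorial_le_dfac n
      have hxc : x * c0 = R ^ 2 := div_mul_cancel₀ _ (ne_of_gt hc0pos)
      have h2 : R ^ (2 * n) = x ^ n * c0 ^ n := by
        rw [pow_mul, ← hxc, mul_pow]
      have h3 : x ^ n * c0 ^ n < (n.factorial : ℝ) * c0 ^ n := by
        apply mul_lt_mul_of_pos_right hxn (by positivity)
      calc R ^ (2 * n) = x ^ n * c0 ^ n := h2
        _ < (n.factorial : ℝ) * c0 ^ n := h3
        _ ≤ ((2 * n - 1).doubleFactorial : ℝ) * c0 ^ n := h1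
        _ ≤ mom n := hmomlow n hnlt
    have h2n : (0:ℝ) < 2 * (n:ℝ) := by
      have : (1:ℝ) ≤ (n:ℝ) := by exact_mod_cast hnlt
      linarith
    have hRrw : R = (R ^ (2 * n)) ^ ((1:ℝ) / (2 * (n:ℝ))) := by
      rw [← Real.rpow_natCast R (2 * n), ← Real.rpow_mul hR.le]
      have hexp : ((2 * n : ℕ) : ℝ) * ((1:ℝ) / (2 * (n:ℝ))) = 1 := by
        push_cast
        field_simp
      rw [hexp, Real.rpow_one]
    calc R = (R ^ (2 * n)) ^ ((1:ℝ) / (2 * (n:ℝ))) := hRrw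
      _ < mom n ^ ((1:ℝ) / (2 * (n:ℝ))) := by
          apply Real.rpow_lt_rpow (by positivity) hmomgt (by positivity)

end
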